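/- Let F ⊆ H be affine subspaces of R^d with a base point b ∈ F, and let F⊥ be the affine subspace through b orthogonal to F (the orthogonal complement affine subspace). For any point q ∈ R^d, let q⊥ be the orthogonal projection of q onto F⊥. Then dist(q, H) = dist(q⊥, proj_{F⊥}(H)), where proj_{F⊥}(H) denotes the image of H under orthogonal projection onto F⊥. -/

import Mathlib

open Metric

/-- for affine subspaces `F ≤ H` of `ℝ^d` with base point `b ∈ F`,
letting `F⊥` be the affine subspace through `b` orthogonal to `F`, and `q⊥` the
orthogonal projection of `q` onto `F⊥`, we have
`dist(q, H) = dist(q⊥, proj_{F⊥}(H))`. -/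
theorem stmt_2 (d : ℕ) (F H : AffineSubspace ℝ (EuclideanSpace ℝ (Fin d)))
    (hFH : F ≤ H) (b : EuclideanSpace ℝ (Fin d)) (hb : b ∈ F)
    (projFperp : EuclideanSpace ℝ (Fin d) → EuclideanSpace ℝ (Fin d))
    (hproj : ∀ x, projFperp x = b + (Submodule.orthogonalProjectionOnto F.directionᗮ (x - b) : EuclideanSpace ℝ (Fin d)))
    (q : EuclideanSpace ℝ (Fin d)) :
    infDist q (H : Set (EuclideanSpace ℝ (Fin d))) =
      infDist (projFperp q) (projFperp '' (H : Set (EuclideanSpace ℝ (Fin d)))) := by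
  classical
  rcases (H : Set (EuclideanSpace ℝ (Fin d))).eq_empty_or_nonempty with hHe | hHn
  · rw [hHe]; simp
  -- distance between projections
  have key : ∀ x : (EuclideanSpace ℝ (Fin d)), dist (projFperp q) (projFperp x)
      = ‖(Submodule.orthogonalProjectionOnto F.directionᗮ (q - x) : (EuclideanSpace ℝ (Fin d)))‖ := by
    intro x
    rw [hproj, hproj, dist_eq_norm]
    have : q - x = (q - b) - (x - b) := by abel
    rw [this, map_sub]
    simp
  have lip : ∀ x : (EuclideanSpace ℝ (Fin d)), dist (projFperp q) (projFperp x) ≤ dist q x := by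
    intro x
    rw [key, dist_eq_norm]
    calc ‖(Submodule.orthogonalProjectionOnto F.directionᗮ (q - x) : (EuclideanSpace ℝ (Fin d)))‖
        ≤ ‖Submodule.orthogonalProjectionOnto F.directionᗮ‖ * ‖q - x‖ :=
          (Submodule.orthogonalProjectionOnto F.directionᗮ).le_opNorm _
      _ ≤ 1 * ‖q - x‖ := by
          gcongr; exact Submodule.orthogonalProjectionOnto_norm_le _
      _ = ‖q - x‖ := one_mul _
  -- for x ∈ H, there is a point of H at distance exactly dist(pq, proj x)
  have exact : ∀ x ∈ (H : Set (EuclideanSpace ℝ (Fin d))), infDist q (H : Set (EuclideanSpace ℝ (Fin d))) ≤ dist (projFperp q) (projFperp x) := by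
    intro x hx
    set v : (EuclideanSpace ℝ (Fin d)) := (Submodule.orthogonalProjectionOnto F.direction (q - x) : (EuclideanSpace ℝ (Fin d))) with hv
    have hvH : v ∈ H.direction :=
      AffineSubspace.direction_le hFH (Submodule.orthogonalProjectionOnto F.direction (q - x)).2
    have hx' : v +ᵥ x ∈ (H : Set (EuclideanSpace ℝ (Fin d))) := AffineSubspace.vadd_mem_of_mem_direction hvH hx
    have hdist : dist q (v +ᵥ x) = dist (projFperp q) (projFperp x) := by
      rw [key, dist_eq_norm]
      have : q - (v +ᵥ x) = (q - x) - v := by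
        simp [vadd_eq_add]; abel
      rw [this, hv]
      rw [Submodule.orthogonalProjectionOnto_orthogonal]; rfl
    calc infDist q (H : Set (EuclideanSpace ℝ (Fin d))) ≤ dist q (v +ᵥ x) := infDist_le_dist_of_mem hx'
      _ = _ := hdist
  apply le_antisymm
  · rw [infDist_eq_iInf (s := projFperp '' (H : Set (EuclideanSpace ℝ (Fin d))))]
    have : Nonempty (projFperp '' (H : Set (EuclideanSpace ℝ (Fin d)))) := (hHn.image _).to_subtype
    refine le_ciInf fun y => ?_
    obtain ⟨x, hx, hxy⟩ := y.2
    rw [show (y : (EuclideanSpace ℝ (Fin d))) = projFperp x from hxy.symm]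
    exact exact x hx
  · rw [infDist_eq_iInf (s := (H : Set (EuclideanSpace ℝ (Fin d))))]
    have : Nonempty ((H : Set (EuclideanSpace ℝ (Fin d))) : Set (EuclideanSpace ℝ (Fin d))) := hHn.to_subtype
    refine le_ciInf fun x => ?_
    calc infDist (projFperp q) (projFperp '' (H : Set (EuclideanSpace ℝ (Fin d))))
        ≤ dist (projFperp q) (projFperp x) :=
          infDist_le_dist_of_mem ⟨x, x.2, rfl⟩
      _ ≤ dist q x := lip x
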